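/- Let p, q be fixed points of X with index functions f_p, f_q such that f_p(i) ≤ f_q(i) for all i ∈ ℤ/nℤ, and suppose the tuple p+q (defined by (p+q)_i = ℂ(e_{f_p(i)} + e_{f_q(i)})) lies in X. Then lim_{λ→0} λ•(p+q) = p and lim_{λ→0} λ^{−1}•(p+q) = q (limits in ℙ(V)^{ℤ/nℤ} for the diagonal ℂ^×-action). -/
import Mathlib


open LinearAlgebra.Projectivization Projectivization Filter Topology

noncomputable section

/-- Topology on the projectivization: quotient topology. -/
instance {K V : Type*} [DivisionRing K] [AddCommGroup V] [Module K V] [TopologicalSpace V] :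
    TopologicalSpace (ℙ K V) :=
  inferInstanceAs (TopologicalSpace (Quotient (projectivizationSetoid K V)))

variable {M : ℕ}

/-- The index set `B`: `⟨l, i⟩` encodes the basis vector `v_{i+1}^{l+1}` of the
`(l+1)`-st Jordan block (both indices are 0-based here, 1-based in the paper). -/
abbrev Idx (j : Fin M → ℕ) : Type := Σ l : Fin M, Fin (j l)

variable {j : Fin M → ℕ}

/-- `j_l − i` in the 1-based notation of the paper: the distance from the end of the block. -/
def col (b : Idx j) : ℕ := j b.1 - 1 - b.2.val

/-- The twisted lexicographic order on `B`:
`b < c` iff `col c < col b`, or `col b = col c` and the block of `b` is earlier. -/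
def blt (b c : Idx j) : Prop := col c < col b ∨ (col b = col c ∧ b.1 < c.1)

/-- `b ≤ c` for the twisted lexicographic order. -/
def ble (b c : Idx j) : Prop := blt b c ∨ b = c

/-- The underlying vector space `V = ℂ^B`. -/
abbrev Vsp (j : Fin M → ℕ) : Type := Idx j → ℂ

/-- The standard basis vector `e_b`. -/
def eVec (b : Idx j) : Vsp j := Pi.single b 1

lemma eVec_ne_zero (b : Idx j) : eVec b ≠ 0 := by
  intro h
  have := congrFun h b
  simp [eVec] at this

/-- The nilpotent Jordan map `J` with `J e_{(l,i)} = e_{(l,i+1)}`. -/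
def Jmap (j : Fin M → ℕ) : Vsp j →ₗ[ℂ] Vsp j where
  toFun u c :=
    if h : 0 < c.2.val then
      u ⟨c.1, ⟨c.2.val - 1, lt_of_le_of_lt (Nat.sub_le _ _) c.2.isLt⟩⟩ else 0
  map_add' u v := by funext c; by_cases h : 0 < c.2.val <;> simp [h]
  map_smul' a u := by funext c; by_cases h : 0 < c.2.val <;> simp [h]

/-- The quiver Grassmannian `X ⊆ ℙ(V)^{ℤ/nℤ}` of one-dimensional subrepresentations. -/
def QG (n : ℕ) (j : Fin M → ℕ) : Set (ZMod n → ℙ ℂ (Vsp j)) :=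
  {L | ∀ i : ZMod n, (L i).submodule.map (Jmap j) ≤ (L (i + 1)).submodule}

/-- `p` is a fixed point of `X` with index function `f`. -/
def IsFixedPt (n : ℕ) (L : ZMod n → ℙ ℂ (Vsp j)) (f : ZMod n → Idx j) : Prop :=
  L ∈ QG n j ∧ ∀ i, L i = mk ℂ (eVec (f i)) (eVec_ne_zero (f i))

/-- The cell `C_b ⊆ ℙ(V)`. -/
def Cb (b : Idx j) : Set (ℙ ℂ (Vsp j)) :=
  {x | ∃ (u : Vsp j) (hu : u ≠ 0), x = mk ℂ u hu ∧ u b ≠ 0 ∧ ∀ c, blt c b → u c = 0}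

/-- The closed cell `Z_b ⊆ ℙ(V)`. -/
def Zb (b : Idx j) : Set (ℙ ℂ (Vsp j)) :=
  {x | ∃ (u : Vsp j) (hu : u ≠ 0), x = mk ℂ u hu ∧ ∀ c, blt c b → u c = 0}

/-- The BB-cell of the fixed point with index function `f`. -/
def cell (n : ℕ) (f : ZMod n → Idx j) : Set (ZMod n → ℙ ℂ (Vsp j)) :=
  QG n j ∩ {L | ∀ i, L i ∈ Cb (f i)}

/-- Rescaling of coordinates by units, as a linear map. -/
def scaleV (c : Idx j → ℂˣ) : Vsp j →ₗ[ℂ] Vsp j where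
  toFun u b := c b * u b
  map_add' u v := by funext b; simp [mul_add]
  map_smul' a u := by funext b; simp [smul_eq_mul]; ring

lemma scaleV_injective (c : Idx j → ℂˣ) : Function.Injective (scaleV c) := by
  intro u v h
  funext b
  have hb : (c b : ℂ) * u b = (c b : ℂ) * v b := congrFun h b
  exact mul_left_cancel₀ (Units.ne_zero (c b)) hb

/-- The weight of the `ℂ^×`-action on the coordinate `b`: `l − M(j_l − i)`. -/
def wt (M : ℕ) {j : Fin M → ℕ} (b : Idx j) : ℤ := (b.1.val + 1 : ℤ) - M * col b

/-- The `ℂ^×`-action on `ℙ(V)`: `λ • e_b = λ^{wt b} e_b`. -/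
def actP (lam : ℂˣ) : ℙ ℂ (Vsp j) → ℙ ℂ (Vsp j) :=
  Projectivization.map (scaleV fun b => lam ^ wt M b) (scaleV_injective _)

/-- The punctured-neighborhood filter of `0` in `ℂ`, pulled back to `ℂˣ`. -/
def zeroF : Filter ℂˣ := comap Units.val (𝓝 (0 : ℂ))

end
lemma eVec_add_ne_zero {M : ℕ} {j : Fin M → ℕ} (b c : Idx j) : eVec b + eVec c ≠ 0 := by
  intro h
  have h2 := congrFun h c
  simp [eVec, Pi.single_apply] at h2
  split_ifs at h2 <;> norm_num at h2

/-- The point `p+q`, given by `(p+q)_i = ℂ(e_{f_p(i)} + e_{f_q(i)})`. -/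
noncomputable def pqPt {M : ℕ} {j : Fin M → ℕ} (n : ℕ) (fp fq : ZMod n → Idx j) :
    ZMod n → ℙ ℂ (Vsp j) :=
  fun i => Projectivization.mk ℂ (eVec (fp i) + eVec (fq i)) (eVec_add_ne_zero _ _)


section auxproof
variable {M : ℕ} {j : Fin M → ℕ}

lemma wt_lt_of_blt {b c : Idx j} (h : blt b c) : wt M b < wt M c := by
  have hb : (b.1.val : ℤ) + 1 ≤ M := by exact_mod_cast b.1.isLt
  have hc : (0:ℤ) ≤ (c.1.val : ℤ) := Int.ofNat_nonneg _
  unfold wt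
  rcases h with h | ⟨h1, h2⟩
  · have hn : M * (col c + 1) ≤ M * col b := Nat.mul_le_mul_left M h
    have hn' : (M:ℤ) * col c + M ≤ (M:ℤ) * col b := by push_cast [Nat.mul_add] at hn ⊢; linarith
    linarith
  · rw [h1]
    have : (b.1.val:ℤ) < c.1.val := by exact_mod_cast h2
    linarith

lemma blt_ne {b c : Idx j} (h : blt b c) : b ≠ c := by
  rintro rfl
  rcases h with h | ⟨_, h⟩ <;> exact lt_irrefl _ h

lemma pert_ne_zero (b c : Idx j) (hbc : b ≠ c) (z : ℂ) : eVec b + z • eVec c ≠ 0 := by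
  intro h
  have := congrFun h b
  simp [eVec, Pi.single_apply, Ne.symm hbc] at this

lemma tendsto_mk {l : Filter ℂˣ} {u : ℂˣ → Vsp j} {v : Vsp j} (hu : ∀ lam, u lam ≠ 0)
    (hv : v ≠ 0) (h : Filter.Tendsto u l (𝓝 v)) :
    Filter.Tendsto (fun lam => Projectivization.mk ℂ (u lam) (hu lam)) l
      (𝓝 (Projectivization.mk ℂ v hv)) := by
  have hc : Continuous (fun w : {w : Vsp j // w ≠ 0} => Projectivization.mk ℂ w.1 w.2) :=
    continuous_quot_mk
  have hsub : Filter.Tendsto (fun lam => (⟨u lam, hu lam⟩ : {w : Vsp j // w ≠ 0})) l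
      (𝓝 ⟨v, hv⟩) := tendsto_subtype_rng.mpr h
  exact (hc.continuousAt.tendsto.comp hsub : _)

lemma actP_mk (lam : ℂˣ) (v : Vsp j) (hv : v ≠ 0) :
    actP lam (Projectivization.mk ℂ v hv)
      = Projectivization.mk ℂ (scaleV (fun b => lam ^ wt M b) v)
        (fun h => hv (scaleV_injective _ (h.trans (map_zero _).symm))) := rfl

lemma units_zpow_coe (lam : ℂˣ) (d : ℤ) : ((lam ^ d : ℂˣ) : ℂ) = (lam : ℂ) ^ d :=
  Units.val_zpow_eq_zpow_val lam d

lemma actP_pq (lam : ℂˣ) (b c : Idx j) (hbc : b ≠ c) (h0 : eVec b + eVec c ≠ 0) :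
    actP lam (Projectivization.mk ℂ (eVec b + eVec c) h0)
      = Projectivization.mk ℂ (eVec b + ((lam:ℂ) ^ (wt M c - wt M b)) • eVec c)
        (pert_ne_zero b c hbc _) := by
  rw [actP_mk, mk_eq_mk_iff']
  refine ⟨(lam:ℂ) ^ (wt M b), ?_⟩
  funext x
  have hlam : (lam:ℂ) ≠ 0 := lam.ne_zero
  simp only [scaleV, LinearMap.coe_mk, AddHom.coe_mk, Pi.smul_apply, Pi.add_apply, eVec,
    smul_eq_mul, units_zpow_coe]
  rcases eq_or_ne x b with rfl | hxb
  · simp [Pi.single_apply, Ne.symm hbc]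
  · rcases eq_or_ne x c with rfl | hxc
    · simp only [Pi.single_apply, if_neg (Ne.symm hbc), if_neg hxb, if_pos rfl, if_pos trivial,
        zero_add, mul_one]
      rw [← zpow_add₀ hlam, add_sub_cancel]
    · simp [Pi.single_apply, hxb, hxc]

lemma tendsto_zpow_zeroF {d : ℤ} (hd : 0 < d) :
    Filter.Tendsto (fun lam : ℂˣ => ((lam:ℂ)) ^ d) zeroF (𝓝 0) := by
  have h0 : Filter.Tendsto (fun lam : ℂˣ => (lam:ℂ)) zeroF (𝓝 (0:ℂ)) := tendsto_comap
  have heq : ∀ lam : ℂˣ, ((lam:ℂ)) ^ d = ((lam:ℂ)) ^ (d.toNat) := fun lam => by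
    rw [← zpow_natCast, Int.toNat_of_nonneg hd.le]
  simp only [heq]
  have := h0.pow d.toNat
  rwa [zero_pow (by omega : d.toNat ≠ 0)] at this

lemma tendsto_pert (b c : Idx j) (hbc : b ≠ c) {g : ℂˣ → ℂ}
    (hg : Filter.Tendsto g zeroF (𝓝 0)) :
    Filter.Tendsto (fun lam => Projectivization.mk ℂ (eVec b + g lam • eVec c)
      (pert_ne_zero b c hbc _)) zeroF
      (𝓝 (Projectivization.mk ℂ (eVec b) (eVec_ne_zero b))) := by
  apply tendsto_mk
  have h1 : Filter.Tendsto (fun lam => g lam • eVec c) zeroF (𝓝 ((0:ℂ) • eVec c)) :=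
    hg.smul_const _
  rw [zero_smul] at h1
  have h2 := (tendsto_const_nhds (x := eVec b) (f := zeroF)).add h1
  rwa [add_zero] at h2

lemma actP_diag (lam : ℂˣ) (b : Idx j) (h0 : eVec b + eVec b ≠ 0) :
    actP lam (Projectivization.mk ℂ (eVec b + eVec b) h0)
      = Projectivization.mk ℂ (eVec b) (eVec_ne_zero b) := by
  rw [actP_mk, mk_eq_mk_iff']
  refine ⟨2 * (lam:ℂ) ^ (wt M b), ?_⟩
  funext x
  simp only [scaleV, LinearMap.coe_mk, AddHom.coe_mk, Pi.smul_apply, Pi.add_apply, eVec,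
    smul_eq_mul, units_zpow_coe, Pi.single_apply]
  rcases eq_or_ne x b with rfl | hxb
  · simp; ring
  · simp [hxb]

lemma inv_coe_zpow (lam : ℂˣ) (d : ℤ) :
    (((lam⁻¹ : ℂˣ)):ℂ) ^ d = (lam:ℂ) ^ (-d) := by
  rw [Units.val_inv_eq_inv_val, inv_zpow, ← zpow_neg]

end auxproof

theorem statement_15 (n M : ℕ) (hn : 1 ≤ n) (hM : 1 ≤ M) (j : Fin M → ℕ)
    (hpart : Antitone j) (hj : ∀ l, 1 ≤ j l)
    (p q : ZMod n → ℙ ℂ (Vsp j)) (fp fq : ZMod n → Idx j)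
    (hp : IsFixedPt n p fp) (hq : IsFixedPt n q fq)
    (hle : ∀ i : ZMod n, ble (fp i) (fq i))
    (hX : pqPt n fp fq ∈ QG n j) :
    Filter.Tendsto (fun lam : ℂˣ => fun i => actP lam (pqPt n fp fq i)) zeroF (𝓝 p) ∧
    Filter.Tendsto (fun lam : ℂˣ => fun i => actP lam⁻¹ (pqPt n fp fq i)) zeroF (𝓝 q) := by
  constructor
  · rw [tendsto_pi_nhds]
    intro i
    rw [(hp.2 i : p i = _)]
    rcases hle i with hlt | heq
    · have hbc := blt_ne hlt
      show Filter.Tendsto (fun lam : ℂˣ => actP lam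
        (Projectivization.mk ℂ (eVec (fp i) + eVec (fq i)) (eVec_add_ne_zero _ _)))
        zeroF (𝓝 (Projectivization.mk ℂ (eVec (fp i)) (eVec_ne_zero (fp i))))
      rw [tendsto_congr (fun lam => actP_pq lam (fp i) (fq i) hbc (eVec_add_ne_zero _ _))]
      exact tendsto_pert (fp i) (fq i) hbc
        (tendsto_zpow_zeroF (sub_pos.mpr (wt_lt_of_blt hlt)))
    · show Filter.Tendsto (fun lam : ℂˣ => actP lam
        (Projectivization.mk ℂ (eVec (fp i) + eVec (fq i)) (eVec_add_ne_zero _ _)))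
        zeroF (𝓝 (Projectivization.mk ℂ (eVec (fp i)) (eVec_ne_zero (fp i))))
      rw [show fq i = fp i from heq.symm]
      rw [tendsto_congr (fun lam => actP_diag lam (fp i) (eVec_add_ne_zero _ _))]
      exact tendsto_const_nhds
  · rw [tendsto_pi_nhds]
    intro i
    rw [(hq.2 i : q i = _)]
    rcases hle i with hlt | heq
    · have hbc := blt_ne hlt
      show Filter.Tendsto (fun lam : ℂˣ => actP lam⁻¹
        (Projectivization.mk ℂ (eVec (fp i) + eVec (fq i)) (eVec_add_ne_zero _ _)))
        zeroF (𝓝 (Projectivization.mk ℂ (eVec (fq i)) (eVec_ne_zero (fq i))))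
      have hcomm : Projectivization.mk ℂ (eVec (fp i) + eVec (fq i)) (eVec_add_ne_zero _ _)
          = Projectivization.mk ℂ (eVec (fq i) + eVec (fp i)) (eVec_add_ne_zero _ _) :=
        (mk_eq_mk_iff' ℂ _ _ _ _).mpr ⟨1, by rw [one_smul, add_comm]⟩
      rw [hcomm,
        tendsto_congr (fun lam => actP_pq lam⁻¹ (fq i) (fp i) hbc.symm (eVec_add_ne_zero _ _))]
      apply tendsto_pert (fq i) (fp i) hbc.symm
      have hg : Filter.Tendsto (fun lam : ℂˣ => (lam:ℂ) ^ (wt M (fq i) - wt M (fp i)))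
          zeroF (𝓝 0) := tendsto_zpow_zeroF (sub_pos.mpr (wt_lt_of_blt hlt))
      simpa only [inv_coe_zpow, neg_sub] using hg
    · show Filter.Tendsto (fun lam : ℂˣ => actP lam⁻¹
        (Projectivization.mk ℂ (eVec (fp i) + eVec (fq i)) (eVec_add_ne_zero _ _)))
        zeroF (𝓝 (Projectivization.mk ℂ (eVec (fq i)) (eVec_ne_zero (fq i))))
      rw [show fp i = fq i from heq]
      rw [tendsto_congr (fun lam => actP_diag lam⁻¹ (fq i) (eVec_add_ne_zero _ _))]
      exact tendsto_const_nhds
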